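/- Let R be a commutative noetherian ring and p a prime ideal. For every bounded complex P of finitely generated free R_p-modules, there exists a bounded complex P~ of finitely generated free R-modules such that the localization (P~)_p is isomorphic to P as complexes of R_p-modules. -/

import Mathlib

open CategoryTheory

set_option maxHeartbeats 1000000

/-- Upgrade an `R`-linear equivalence between modules over a localization to a linear
equivalence over the localization. -/
noncomputable def LinearEquiv.extendScalarsOfIsLocalization' {R : Type*} [CommSemiring R]
    (S : Submonoid R) (A : Type*) [CommSemiring A] [Algebra R A] [IsLocalization S A]
    {M N : Type*} [AddCommMonoid M] [Module R M] [Module A M] [IsScalarTower R A M]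
    [AddCommMonoid N] [Module R N] [Module A N] [IsScalarTower R A N]
    (e : M ≃ₗ[R] N) : M ≃ₗ[A] N :=
  { e.toLinearMap.extendScalarsOfIsLocalization S A with
    invFun := e.symm
    left_inv := e.left_inv
    right_inv := e.right_inv }

universe v w

/-- Universe polymorphic version of the theorem. -/
theorem stmt18_aux (R : Type) [CommRing R] (p : Ideal R) [p.IsPrime]
    (P : ℤ → ModuleCat.{v} (Localization.AtPrime p))
    (dP : ∀ i : ℤ, P i →ₗ[Localization.AtPrime p] P (i + 1))
    (hPsq : ∀ (i : ℤ) (x : P i), dP (i + 1) (dP i x) = 0)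
    (hPfree : ∀ i : ℤ, Module.Free (Localization.AtPrime p) (P i))
    (hPfg : ∀ i : ℤ, Module.Finite (Localization.AtPrime p) (P i))
    (a b : ℤ) (hPbdd : ∀ i : ℤ, i < a ∨ b < i → Subsingleton (P i)) :
    ∃ (Q : ℤ → ModuleCat.{w} R) (dQ : ∀ i : ℤ, Q i →ₗ[R] Q (i + 1)),
      (∀ (i : ℤ) (x : Q i), dQ (i + 1) (dQ i x) = 0) ∧
      (∀ i : ℤ, Module.Free R (Q i)) ∧
      (∀ i : ℤ, Module.Finite R (Q i)) ∧
      (∃ a' b' : ℤ, ∀ i : ℤ, i < a' ∨ b' < i → Subsingleton (Q i)) ∧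
      ∃ e : ∀ i : ℤ, LocalizedModule p.primeCompl (Q i) ≃ₗ[Localization.AtPrime p] P i,
        ∀ (i : ℤ) (x : LocalizedModule p.primeCompl (Q i)),
          e (i + 1)
            ((IsLocalizedModule.map p.primeCompl
                (LocalizedModule.mkLinearMap p.primeCompl (Q i))
                (LocalizedModule.mkLinearMap p.primeCompl (Q (i + 1)))
                (dQ i)) x)
            = dP i (e i x) := by
  classical
  set A := Localization.AtPrime p with hAdef
  -- choose finite bases of the `P i`
  have hbas : ∀ i : ℤ, ∃ n : ℕ, Nonempty (Module.Basis (Fin n) A (P i)) := by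
    intro i
    haveI := hPfree i; haveI := hPfg i
    exact ⟨Module.finrank A (P i), ⟨Module.finBasis A (P i)⟩⟩
  choose n Bne using hbas
  let B : ∀ i : ℤ, Module.Basis (Fin (n i)) A (P i) := fun i => (Bne i).some
  -- free models in universe `w`
  let U : ℤ → Type w := fun j => ULift.{w} (Fin (n j) →₀ R)
  let φ : ∀ j : ℤ, U j ≃ₗ[R] (Fin (n j) →₀ R) := fun _ => ULift.moduleEquiv
  -- localization maps on finite free modules
  let L : ∀ i : ℤ, (Fin (n i) →₀ R) →ₗ[R] (Fin (n i) →₀ A) := fun _ =>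
    Finsupp.mapRange.linearMap (Algebra.linearMap R A)
  haveI hLM : ∀ i : ℤ, IsLocalizedModule p.primeCompl (L i) := fun _ => inferInstance
  let Lu : ∀ i : ℤ, U i →ₗ[R] (Fin (n i) →₀ A) := fun i => L i ∘ₗ (φ i).toLinearMap
  haveI hLuM : ∀ i : ℤ, IsLocalizedModule p.primeCompl (Lu i) := fun i =>
    IsLocalizedModule.of_linearEquiv_right p.primeCompl (L i) (φ i)
  -- the differentials transported to the free models
  let δ : ∀ i : ℤ, (Fin (n i) →₀ A) →ₗ[A] (Fin (n (i + 1)) →₀ A) := fun i =>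
    (B (i + 1)).repr.toLinearMap ∘ₗ (dP i) ∘ₗ (B i).repr.symm.toLinearMap
  have hδ : ∀ (i : ℤ) (y : Fin (n i) →₀ A), δ (i + 1) (δ i y) = 0 := by
    intro i y
    simp only [δ, LinearMap.comp_apply, LinearEquiv.coe_coe, LinearEquiv.symm_apply_apply]
    rw [hPsq]
    simp
  -- clear denominators
  have hg : ∀ i : ℤ, ∃ (g : (Fin (n i) →₀ R) →ₗ[R] (Fin (n (i + 1)) →₀ R))
      (s : p.primeCompl), (L (i + 1)) ∘ₗ g = s • (((δ i).restrictScalars R) ∘ₗ (L i)) := by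
    intro i
    obtain ⟨h, s, hs⟩ := Module.FinitePresentation.exists_lift_of_isLocalizedModule
      p.primeCompl (L (i + 1)) (((δ i).restrictScalars R) ∘ₗ (L i))
    exact ⟨h, s, hs⟩
  choose g s hgs using hg
  -- the composites of the lifted maps are killed by elements of `S`
  have hgg : ∀ i : ℤ, ∃ t : p.primeCompl, t • (g (i + 1) ∘ₗ g i) = 0 := by
    intro i
    have h0 : (L (i + 1 + 1)) ∘ₗ (g (i + 1) ∘ₗ g i) = (L (i + 1 + 1)) ∘ₗ (0 : _) := by
      refine LinearMap.ext fun m => ?_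
      have e1 := LinearMap.congr_fun (hgs (i + 1)) (g i m)
      have e2 := LinearMap.congr_fun (hgs i) m
      simp only [LinearMap.comp_apply, LinearMap.smul_apply,
        LinearMap.coe_restrictScalars] at e1 e2
      simp only [LinearMap.comp_apply, LinearMap.zero_apply, map_zero]
      rw [e1, e2, Submonoid.smul_def, Submonoid.smul_def, LinearMap.map_smul_of_tower, hδ]
      simp
    obtain ⟨t, ht⟩ := Module.Finite.exists_smul_of_comp_eq_of_isLocalizedModule
      p.primeCompl (L (i + 1 + 1)) (g (i + 1) ∘ₗ g i) 0 h0
    refine ⟨t, by simpa using ht⟩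
  choose t ht using hgg
  -- the relevant finite range of degrees
  set K : Finset ℤ := Finset.Icc a (b - 1) with hKdef
  set tP : p.primeCompl := ∏ j ∈ K, t j with htPdef
  set sP : p.primeCompl := ∏ j ∈ K, s j with hsPdef
  set u : p.primeCompl := tP * sP with hudef
  set c : ℤ → R := fun i => (tP : R) * ∏ j ∈ K.erase i, (s j : R) with hcdef
  -- the scaled differentials
  let dQ : ∀ i : ℤ, (Fin (n i) →₀ R) →ₗ[R] (Fin (n (i + 1)) →₀ R) := fun i =>
    if i ∈ K then c i • g i else 0
  have hdQ : ∀ i : ℤ, dQ i = if i ∈ K then c i • g i else 0 := fun _ => rfl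
  let dQu : ∀ i : ℤ, U i →ₗ[R] U (i + 1) := fun i =>
    (φ (i + 1)).symm.toLinearMap ∘ₗ dQ i ∘ₗ (φ i).toLinearMap
  have hdQu : ∀ (i : ℤ) (m : U i), dQu i m = (φ (i + 1)).symm (dQ i (φ i m)) := fun _ _ => rfl
  have hcu : ∀ i ∈ K, c i * (s i : R) = (u : R) := by
    intro i hi
    have hsPc : (sP : R) = ∏ j ∈ K, (s j : R) := by
      rw [hsPdef]; exact Submonoid.coe_finset_prod _ _ _
    rw [hcdef, hudef]
    push_cast
    rw [mul_assoc, Finset.prod_erase_mul _ _ hi, hsPc]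
  -- d ∘ d = 0
  have hdd : ∀ (i : ℤ) (m : Fin (n i) →₀ R), dQ (i + 1) (dQ i m) = 0 := by
    intro i m
    by_cases hi : i ∈ K
    · by_cases hi1 : i + 1 ∈ K
      · rw [hdQ, hdQ, if_pos hi, if_pos hi1]
        simp only [LinearMap.smul_apply, map_smul, smul_smul]
        have hdvd : (t i : R) ∣ c i * c (i + 1) := by
          have h1 : (t i : R) ∣ (tP : R) := by
            have : (tP : R) = ∏ j ∈ K, (t j : R) := by
              rw [htPdef]; exact Submonoid.coe_finset_prod _ _ _
            rw [this]
            exact Finset.dvd_prod_of_mem _ hi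
          have h2 : (t i : R) ∣ c (i + 1) := by
            rw [hcdef]
            exact h1.mul_right _
          exact h2.mul_left _
        obtain ⟨r, hr⟩ := hdvd
        rw [hr, mul_comm (t i : R) r, mul_smul]
        have := LinearMap.congr_fun (ht i) m
        simp only [LinearMap.smul_apply, LinearMap.comp_apply, LinearMap.zero_apply,
          Submonoid.smul_def] at this
        rw [this, smul_zero]
      · rw [hdQ (i + 1), if_neg hi1]
        simp
    · rw [hdQ i, if_neg hi]
      simp
  have hddu : ∀ (i : ℤ) (m : U i), dQu (i + 1) (dQu i m) = 0 := by
    intro i m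
    rw [hdQu, hdQu, LinearEquiv.apply_symm_apply, hdd, map_zero]
  -- localization of the scaled differentials
  have hloc : ∀ i ∈ K, ∀ m : U i, Lu (i + 1) (dQu i m) = (u : R) • δ i (Lu i m) := by
    intro i hi m
    show L (i + 1) (φ (i + 1) ((φ (i + 1)).symm (dQ i (φ i m)))) = (u : R) • δ i (L i (φ i m))
    rw [LinearEquiv.apply_symm_apply, hdQ, if_pos hi]
    simp only [LinearMap.smul_apply, map_smul]
    have e2 := LinearMap.congr_fun (hgs i) (φ i m)
    simp only [LinearMap.comp_apply, LinearMap.smul_apply,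
      LinearMap.coe_restrictScalars] at e2
    rw [e2, Submonoid.smul_def, smul_smul, hcu i hi]
  -- the unit by which we rescale
  have hu : IsUnit (algebraMap R A (u : R)) := IsLocalization.map_units A u
  set w : Aˣ := hu.unit with hwdef
  -- the comparison isomorphisms
  let E : ∀ i : ℤ, LocalizedModule p.primeCompl (U i) ≃ₗ[A] (Fin (n i) →₀ A) :=
    fun i => LinearEquiv.extendScalarsOfIsLocalization' p.primeCompl A
      (IsLocalizedModule.iso p.primeCompl (Lu i))
  let e : ∀ i : ℤ, LocalizedModule p.primeCompl (U i) ≃ₗ[A] P i := fun i =>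
    ((E i).trans (B i).repr.symm).trans (LinearEquiv.smulOfUnit (w ^ (-i)))
  have hE : ∀ (j : ℤ) (v : U j), E j (LocalizedModule.mk v 1) = Lu j v := by
    intro j v
    show IsLocalizedModule.iso p.primeCompl (Lu j) (LocalizedModule.mk v 1) = Lu j v
    have h := LinearMap.congr_fun (IsLocalizedModule.iso_symm_comp p.primeCompl (Lu j)) v
    simp only [LinearMap.comp_apply, LinearEquiv.coe_coe,
      LocalizedModule.mkLinearMap_apply] at h
    rw [← h, LinearEquiv.apply_symm_apply]
  have he : ∀ (j : ℤ) (x : LocalizedModule p.primeCompl (U j)),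
      e j x = (w ^ (-j) : Aˣ) • (B j).repr.symm (E j x) := fun _ _ => rfl
  -- the key computation on integral elements
  have core : ∀ i ∈ K, ∀ m : U i,
      e (i + 1) (LocalizedModule.mk (dQu i m) 1) = dP i (e i (LocalizedModule.mk m 1)) := by
    intro i hi m
    rw [he, he, hE, hE, hloc i hi m]
    rw [← algebraMap_smul A ((u : R)) (δ i (Lu i m)), map_smul]
    have hz : ((B (i + 1)).repr.symm) (δ i (Lu i m)) = dP i ((B i).repr.symm (Lu i m)) :=
      (B (i + 1)).repr.symm_apply_apply (dP i ((B i).repr.symm (Lu i m)))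
    rw [hz]
    rw [Units.smul_def, Units.smul_def, map_smul]
    rw [← hu.unit_spec, ← hwdef]
    rw [smul_smul, ← Units.val_mul]
    have harith : w ^ (-(i + 1)) * w = w ^ (-i) := by
      have h1 : (-(i + 1) : ℤ) + 1 = -i := by ring
      rw [← zpow_add_one w (-(i + 1)), h1]
    rw [harith]
  -- assemble the data
  refine ⟨fun i => ModuleCat.of R (U i), dQu, hddu,
    fun i => inferInstanceAs (Module.Free R (U i)),
    fun i => inferInstanceAs (Module.Finite R (U i)),
    ⟨a, b, ?_⟩, ⟨e, ?_⟩⟩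
  · -- boundedness
    intro i hi
    haveI : Subsingleton (P i) := hPbdd i hi
    haveI : IsEmpty (Fin (n i)) := ⟨fun j => (B i).ne_zero j (Subsingleton.elim _ _)⟩
    haveI : Subsingleton (Fin (n i) →₀ R) := inferInstance
    exact Equiv.ulift.subsingleton
  · -- compatibility with the differentials
    intro i x
    by_cases h1 : b < i + 1
    · haveI : Subsingleton (P (i + 1)) := hPbdd (i + 1) (Or.inr h1)
      exact Subsingleton.elim _ _
    by_cases h2 : i < a
    · haveI : Subsingleton (P i) := hPbdd i (Or.inl h2)
      haveI hss : Subsingleton (LocalizedModule p.primeCompl (U i)) :=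
        (e i).toEquiv.subsingleton
      rw [show x = 0 from @Subsingleton.elim _ hss x 0,
        map_zero, map_zero, map_zero, map_zero]
    · have hiK : i ∈ K := by
        rw [hKdef, Finset.mem_Icc]
        omega
      induction x using LocalizedModule.induction_on with
      | _ m sm =>
        rw [IsLocalizedModule.map_LocalizedModules]
        have hus : IsUnit (algebraMap R A (sm : R)) := IsLocalization.map_units A sm
        have hinj : Function.Injective (fun z : P (i + 1) => hus.unit • z) := by
          intro z1 z2 hz
          simpa only [inv_smul_smul] using congrArg (fun z => (hus.unit⁻¹ : Aˣ) • z) hz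
        apply hinj
        have hcancel : ∀ (j : ℤ) (v : U j) (sc : p.primeCompl),
            (algebraMap R A (sc : R)) •
              (LocalizedModule.mk v sc : LocalizedModule p.primeCompl (U j)) =
              LocalizedModule.mk v 1 := by
          intro j v sc
          rw [← Localization.mk_one_eq_algebraMap, LocalizedModule.mk_smul_mk, one_mul,
            ← Submonoid.smul_def, LocalizedModule.mk_cancel]
        show hus.unit • (e (i + 1) (LocalizedModule.mk (dQu i m) sm)) =
          hus.unit • (dP i (e i (LocalizedModule.mk m sm)))
        rw [Units.smul_def, Units.smul_def, hus.unit_spec, ← map_smul, ← map_smul, ← map_smul,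
          hcancel, hcancel, core i hiK m]

/-- Let `R` be a commutative noetherian ring and `p` a prime ideal. For every bounded
complex `P` of finitely generated free `R_p`-modules, there exists a bounded complex `Q`
of finitely generated free `R`-modules whose localization `Q_p` is isomorphic to `P` as
complexes of `R_p`-modules: there are `R_p`-linear isomorphisms
`e i : (Q i)_p ≃ P i` commuting with the differentials. -/
theorem stmt18 (R : Type) [CommRing R] [IsNoetherianRing R] (p : Ideal R) [p.IsPrime]
    (P : ℤ → ModuleCat (Localization.AtPrime p))
    (dP : ∀ i : ℤ, P i →ₗ[Localization.AtPrime p] P (i + 1))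
    (hPsq : ∀ (i : ℤ) (x : P i), dP (i + 1) (dP i x) = 0)
    (hPfree : ∀ i : ℤ, Module.Free (Localization.AtPrime p) (P i))
    (hPfg : ∀ i : ℤ, Module.Finite (Localization.AtPrime p) (P i))
    (a b : ℤ) (hPbdd : ∀ i : ℤ, i < a ∨ b < i → Subsingleton (P i)) :
    ∃ (Q : ℤ → ModuleCat R) (dQ : ∀ i : ℤ, Q i →ₗ[R] Q (i + 1)),
      (∀ (i : ℤ) (x : Q i), dQ (i + 1) (dQ i x) = 0) ∧
      (∀ i : ℤ, Module.Free R (Q i)) ∧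
      (∀ i : ℤ, Module.Finite R (Q i)) ∧
      (∃ a' b' : ℤ, ∀ i : ℤ, i < a' ∨ b' < i → Subsingleton (Q i)) ∧
      ∃ e : ∀ i : ℤ, LocalizedModule p.primeCompl (Q i) ≃ₗ[Localization.AtPrime p] P i,
        ∀ (i : ℤ) (x : LocalizedModule p.primeCompl (Q i)),
          e (i + 1)
            ((IsLocalizedModule.map p.primeCompl
                (LocalizedModule.mkLinearMap p.primeCompl (Q i))
                (LocalizedModule.mkLinearMap p.primeCompl (Q (i + 1))) (dQ i)) x)
            = dP i (e i x) := by
  exact stmt18_aux R p P dP hPsq hPfree hPfg a b hPbdd
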